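/- θ_r = ⌊r/2⌋·⌊(r+1)/2⌋ is the maximum eigenvalue of the distance matrix of the cycle C_r, and its eigenspace is one-dimensional, spanned by the all-ones vector. -/
import Mathlib

open Finset

lemma sum_min_cycle (r : ℕ) :
    ∑ k ∈ Finset.range r, min k (r - k) = (r / 2) * ((r + 1) / 2) := by
  induction r using Nat.twoStepInduction with
  | zero => simp
  | one => simp
  | more r ih _ =>
    rw [Finset.sum_range_succ, Finset.sum_range_succ']
    have h1 : ∀ k ∈ Finset.range r, min (k + 1) (r + 2 - (k + 1)) = min k (r - k) + 1 := by
      intro k hk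
      simp only [Finset.mem_range] at hk
      omega
    rw [Finset.sum_congr rfl h1, Finset.sum_add_distrib, Finset.sum_const, ih]
    simp only [Finset.card_range, smul_eq_mul, mul_one]
    rcases Nat.even_or_odd r with ⟨c, hc⟩ | ⟨c, hc⟩
    · have e1 : r / 2 = c := by omega
      have e2 : (r + 1) / 2 = c := by omega
      have e3 : (r + 2) / 2 = c + 1 := by omega
      have e4 : (r + 2 + 1) / 2 = c + 1 := by omega
      rw [e1, e2, e3, e4]
      have : min 0 (r + 2 - 0) = 0 := by omega
      rw [this]
      have : min (r + 1) (r + 2 - (r + 1)) = 1 := by omega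
      rw [this, hc]; ring
    · have e1 : r / 2 = c := by omega
      have e2 : (r + 1) / 2 = c + 1 := by omega
      have e3 : (r + 2) / 2 = c + 1 := by omega
      have e4 : (r + 2 + 1) / 2 = c + 2 := by omega
      rw [e1, e2, e3, e4]
      have : min 0 (r + 2 - 0) = 0 := by omega
      rw [this]
      have : min (r + 1) (r + 2 - (r + 1)) = 1 := by omega
      rw [this, hc]; ring

/-- `θ_r = ⌊r/2⌋·⌊(r+1)/2⌋` is the maximum eigenvalue of the distance matrix of the
cycle `C_r`, and its eigenspace is one-dimensional, spanned by the all-ones vector. -/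
theorem cycle_distance_matrix_max_eigenvalue (r : ℕ) (hr : 3 ≤ r)
    (D : Matrix (Fin r) (Fin r) ℝ)
    (hD : ∀ i j : Fin r, D i j =
      (min ((i.val : ℤ) - j.val).natAbs (r - ((i.val : ℤ) - j.val).natAbs) : ℝ))
    (θ : ℝ) (hθ : θ = ((r / 2) * ((r + 1) / 2) : ℕ)) :
    (D.mulVec (fun _ => 1) = θ • (fun _ => 1 : Fin r → ℝ)) ∧
    (∀ μ : ℝ, (∃ v : Fin r → ℝ, v ≠ 0 ∧ D.mulVec v = μ • v) → μ ≤ θ) ∧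
    (∀ v : Fin r → ℝ, D.mulVec v = θ • v → ∃ c : ℝ, v = c • (fun _ => 1 : Fin r → ℝ)) := by
  haveI : NeZero r := ⟨by omega⟩
  haveI : Nonempty (Fin r) := ⟨⟨0, by omega⟩⟩
  have hDnat : ∀ i j : Fin r, D i j =
      ((min ((i.val : ℤ) - j.val).natAbs (r - ((i.val : ℤ) - j.val).natAbs) : ℕ) : ℝ) := by
    intro i j
    rw [hD]
    have hi := i.isLt
    have hj := j.isLt
    have hd : ((i.val : ℤ) - j.val).natAbs ≤ r := by omega
    push_cast [Nat.cast_min, Nat.cast_sub hd]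
    ring_nf
  -- nonnegativity of entries
  have hDnn : ∀ i j, 0 ≤ D i j := by
    intro i j; rw [hDnat]; positivity
  -- positivity off the diagonal
  have hDpos : ∀ i j, i ≠ j → 0 < D i j := by
    intro i j hij
    rw [hDnat]
    have hij' : i.val ≠ j.val := fun h => hij (Fin.ext h)
    have hi := i.isLt
    have hj := j.isLt
    have : 0 < min ((i.val : ℤ) - j.val).natAbs (r - ((i.val : ℤ) - j.val).natAbs) := by
      omega
    exact_mod_cast this
  -- row sums
  have hrow : ∀ i : Fin r, ∑ j, D i j = θ := by
    intro i
    have key : ∀ j : Fin r,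
        D i j = (fun k : Fin r => ((min k.val (r - k.val) : ℕ) : ℝ)) (i - j) := by
      intro j
      rw [hDnat]
      have hv : (i - j).val = (r - j.val + i.val) % r := by rw [Fin.sub_def]
      have hi := i.isLt
      have hj := j.isLt
      simp only
      congr 1
      rcases le_or_gt j.val i.val with h | h
      · have hv' : (i - j).val = i.val - j.val := by
          rw [hv, show r - j.val + i.val = (i.val - j.val) + r by omega,
            Nat.add_mod_right, Nat.mod_eq_of_lt (by omega)]
        rw [hv']; omega
      · have hv' : (i - j).val = r - j.val + i.val := by
          rw [hv, Nat.mod_eq_of_lt (by omega)]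
        rw [hv']; omega
    calc ∑ j, D i j = ∑ j : Fin r,
          (fun k : Fin r => ((min k.val (r - k.val) : ℕ) : ℝ)) (i - j) := by
            exact Finset.sum_congr rfl fun j _ => key j
      _ = ∑ k : Fin r, ((min k.val (r - k.val) : ℕ) : ℝ) := by
            exact Fintype.sum_equiv (Equiv.subLeft i) _ _ (fun j => rfl)
      _ = ((∑ k : Fin r, min k.val (r - k.val) : ℕ) : ℝ) := by
            rw [Nat.cast_sum]
      _ = ((∑ k ∈ Finset.range r, min k (r - k) : ℕ) : ℝ) := by
            rw [Fin.sum_univ_eq_sum_range (fun k => min k (r - k))]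
      _ = θ := by rw [sum_min_cycle, hθ]
  refine ⟨?_, ?_, ?_⟩
  · -- all-ones is an eigenvector
    funext i
    simp only [Matrix.mulVec, dotProduct, mul_one, Pi.smul_apply, smul_eq_mul]
    rw [hrow i]
  · -- θ is maximal
    rintro μ ⟨v, hv0, hveq⟩
    obtain ⟨i, hi⟩ := Finite.exists_max (fun j => |v j|)
    have hvi : 0 < |v i| := by
      obtain ⟨j, hj⟩ := Function.ne_iff.mp hv0
      exact lt_of_lt_of_le (abs_pos.mpr hj) (hi j)
    have hmv : μ * v i = ∑ j, D i j * v j := by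
      have := congrFun hveq i
      simp only [Matrix.mulVec, dotProduct, Pi.smul_apply, smul_eq_mul] at this
      exact this.symm
    have h1 : |μ| * |v i| ≤ θ * |v i| := by
      calc |μ| * |v i| = |μ * v i| := (abs_mul μ (v i)).symm
        _ = |∑ j, D i j * v j| := by rw [hmv]
        _ ≤ ∑ j, |D i j * v j| := Finset.abs_sum_le_sum_abs _ _
        _ = ∑ j, D i j * |v j| := by
            exact Finset.sum_congr rfl fun j _ => by
              rw [abs_mul, abs_of_nonneg (hDnn i j)]
        _ ≤ ∑ j, D i j * |v i| := Finset.sum_le_sum fun j _ =>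
              mul_le_mul_of_nonneg_left (hi j) (hDnn i j)
        _ = (∑ j, D i j) * |v i| := (Finset.sum_mul _ _ _).symm
        _ = θ * |v i| := by rw [hrow i]
    have : |μ| ≤ θ := le_of_mul_le_mul_right h1 hvi
    exact le_trans (le_abs_self μ) this
  · -- eigenspace is one-dimensional
    intro v hveq
    obtain ⟨i, hi⟩ := Finite.exists_max v
    have hsum : ∑ j, D i j * v j = θ * v i := by
      have := congrFun hveq i
      simp only [Matrix.mulVec, dotProduct, Pi.smul_apply, smul_eq_mul] at this
      exact this
    have key : ∀ j, D i j * v j = D i j * v i := by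
      by_contra h
      push_neg at h
      obtain ⟨j0, hj0⟩ := h
      have hle : ∀ j ∈ Finset.univ, D i j * v j ≤ D i j * v i := fun j _ =>
        mul_le_mul_of_nonneg_left (hi j) (hDnn i j)
      have hlt : ∑ j, D i j * v j < ∑ j, D i j * v i :=
        Finset.sum_lt_sum hle ⟨j0, Finset.mem_univ _,
          lt_of_le_of_ne (hle j0 (Finset.mem_univ _)) hj0⟩
      rw [hsum, ← Finset.sum_mul, hrow i] at hlt
      exact lt_irrefl _ hlt
    refine ⟨v i, ?_⟩
    funext j
    simp only [Pi.smul_apply, smul_eq_mul, mul_one]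
    by_cases hji : j = i
    · rw [hji]
    · have hpos := hDpos i j (fun h => hji h.symm)
      exact mul_left_cancel₀ (ne_of_gt hpos) (key j)
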